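/- Let (L, Φ, Σ) be a comonad over dom on the arrow category of C, let (f, s) and (g, t) be L-coalgebras with f : X → Y an isomorphism in C. Then every commutative square (h, k) : f → g in the arrow category is automatically a morphism of L-coalgebras (f, s) → (g, t). -/

import Mathlib

open CategoryTheory CategoryTheory.Limits

universe v u

variable {C : Type u} [Category.{v} C]

/-- A coalgebra structure (over `dom`) for a comonad `L` over `dom` on the arrow category. -/
def IsCoalg (L : Comonad (Arrow C))
    (hL : L.toFunctor ⋙ Arrow.leftFunc = Arrow.leftFunc)
    {f : Arrow C} (θ : f ⟶ L.obj f) : Prop :=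
  θ.left = eqToHom ((Functor.congr_obj hL f).symm) ∧
  θ ≫ L.ε.app f = 𝟙 f ∧
  θ ≫ L.δ.app f = θ ≫ L.map θ

/-- Given a comonad `L` over `dom` on the arrow category and `L`-coalgebras
`(f, s)` and `(g, t)` with `f` an isomorphism, every commutative square `(h, k) : f → g`
is automatically a morphism of `L`-coalgebras. -/
theorem stmt2 (L : Comonad (Arrow C))
    (hL : L.toFunctor ⋙ Arrow.leftFunc = Arrow.leftFunc)
    (hcounit : ∀ f : Arrow C, (L.ε.app f).left = eqToHom (Functor.congr_obj hL f))
    (hcomul : ∀ f : Arrow C,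
      (L.δ.app f).left = eqToHom ((Functor.congr_obj hL (L.obj f)).symm))
    {f g : Arrow C} (θf : f ⟶ L.obj f) (θg : g ⟶ L.obj g)
    (hθf : IsCoalg L hL θf) (hθg : IsCoalg L hL θg)
    (hf : IsIso f.hom) (sq : f ⟶ g) :
    sq ≫ θg = θf ≫ L.map sq := by
  have hL' : ∀ X : Arrow C, (L.obj X).left = X.left := fun X => Functor.congr_obj hL X
  have hθf1 : θf.left = eqToHom (hL' f).symm := hθf.1
  have hθg1 : θg.left = eqToHom (hL' g).symm := hθg.1
  have hLsq : (L.map sq).left =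
      eqToHom (hL' f) ≫ sq.left ≫
        eqToHom (hL' g).symm := by
    have := Functor.congr_hom hL sq
    exact this
  have hθfr : θf.right = inv f.hom ≫ eqToHom ((hL' f).symm) ≫ (L.obj f).hom := by
    rw [← hθf1, Arrow.w θf, IsIso.inv_hom_id_assoc]
  ext
  · simp [hθf1, hθg1, hLsq]
  · show sq.right ≫ θg.right = θf.right ≫ (L.map sq).right
    rw [hθfr]
    have w1 : (L.obj f).hom ≫ (L.map sq).right = (L.map sq).left ≫ (L.obj g).hom :=
      (Arrow.w (L.map sq)).symm
    rw [Category.assoc, Category.assoc, w1, hLsq]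
    have w2 : eqToHom ((hL' g).symm) ≫ (L.obj g).hom = g.hom ≫ θg.right := by
      rw [← hθg1]; exact Arrow.w θg
    simp only [Category.assoc, w2, eqToHom_trans, eqToHom_refl, Category.id_comp, eqToHom_trans_assoc,
      Arrow.w_assoc sq, IsIso.inv_hom_id_assoc]
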